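/- arXiv:1412.0574 — 3 statements merged into one kernel-verified Lean document; each statement's English description precedes it below -/
import Mathlib

section
/- Let α₁ ≥ α₂ ≥ ⋯ ≥ α₁₄ ≥ 0 be real numbers with α₁ + ⋯ + α₁₄ = 1 and α₁ + α₂ < 1/2. Suppose that no sub-sum ∑_{i ∈ S} αᵢ over a subset S ⊆ {1,…,14} lies in the interval [5/12, 7/12]. Then α₅ > 1/6 and α₁ + α₂ + α₆ + α₇ + ⋯ + α₁₄ < 5/12. -/
/-- Lemma 9 (combinatorial lemma): if `α₁ ≥ ⋯ ≥ α₁₄ ≥ 0` sum to `1`, `α₁ + α₂ < 1/2`,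
and no sub-sum lies in `[5/12, 7/12]`, then `α₅ > 1/6` and
`α₁ + α₂ + α₆ + ⋯ + α₁₄ < 5/12`. -/
theorem stmt_0 (α : Fin 14 → ℝ)
    (hmono : ∀ i j : Fin 14, i ≤ j → α j ≤ α i)
    (hnonneg : ∀ i, 0 ≤ α i)
    (hsum : ∑ i, α i = 1)
    (h12 : α 0 + α 1 < 1 / 2)
    (hnosub : ∀ S : Finset (Fin 14),
      ¬ (5 / 12 ≤ ∑ i ∈ S, α i ∧ ∑ i ∈ S, α i ≤ 7 / 12)) :
    α 4 > 1 / 6 ∧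
      α 0 + α 1 + ∑ i ∈ Finset.univ.filter (fun i : Fin 14 => 5 ≤ (i : ℕ)), α i
        < 5 / 12 := by
  have key : ∀ S : Finset (Fin 14), ∑ i ∈ S, α i < 5/12 ∨ 7/12 < ∑ i ∈ S, α i := by
    intro S
    have h := hnosub S
    by_contra hc
    push_neg at hc
    exact h ⟨hc.1, hc.2⟩
  have hu : (Finset.univ : Finset (Fin 14)) = {0,1,2,3,4,5,6,7,8,9,10,11,12,13} := by decide
  rw [hu] at hsum
  simp [Finset.sum_insert, Finset.mem_insert] at hsum
  -- monotonicity facts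
  have m02 : α 2 ≤ α 0 := hmono 0 2 (by decide)
  have m13 : α 3 ≤ α 1 := hmono 1 3 (by decide)
  have m23 : α 3 ≤ α 2 := hmono 2 3 (by decide)
  have m34 : α 4 ≤ α 3 := hmono 3 4 (by decide)
  have m45 : α 5 ≤ α 4 := hmono 4 5 (by decide)
  have m46 : α 6 ≤ α 4 := hmono 4 6 (by decide)
  have m47 : α 7 ≤ α 4 := hmono 4 7 (by decide)
  have m48 : α 8 ≤ α 4 := hmono 4 8 (by decide)
  have m49 : α 9 ≤ α 4 := hmono 4 9 (by decide)
  have m4a : α 10 ≤ α 4 := hmono 4 10 (by decide)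
  have m4b : α 11 ≤ α 4 := hmono 4 11 (by decide)
  have m4c : α 12 ≤ α 4 := hmono 4 12 (by decide)
  have m4d : α 13 ≤ α 4 := hmono 4 13 (by decide)
  -- base sum α0 + α1 < 5/12
  have k01 := key {0,1}
  simp [Finset.sum_insert, Finset.mem_insert] at k01
  have h01 : α 0 + α 1 < 5/12 := by rcases k01 with h | h <;> linarith
  -- chain sums
  have k4 := key {0,1,4}
  have k5 := key {0,1,4,5}
  have k6 := key {0,1,4,5,6}
  have k7 := key {0,1,4,5,6,7}
  have k8 := key {0,1,4,5,6,7,8}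
  have k9 := key {0,1,4,5,6,7,8,9}
  have k10 := key {0,1,4,5,6,7,8,9,10}
  have k11 := key {0,1,4,5,6,7,8,9,10,11}
  have k12 := key {0,1,4,5,6,7,8,9,10,11,12}
  have k13 := key {0,1,4,5,6,7,8,9,10,11,12,13}
  simp [Finset.sum_insert, Finset.mem_insert] at k4 k5 k6 k7 k8 k9 k10 k11 k12 k13
  -- t13 = 1 - α2 - α3 > 7/12, so the chain crosses the gap somewhere
  have t13 : ¬ (α 0 + (α 1 + (α 4 + (α 5 + (α 6 + (α 7 + (α 8 + (α 9 + (α 10 + (α 11 + (α 12 + α 13)))))))))) < 5/12) := by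
    intro h; linarith
  have h4 : α 4 > 1/6 := by
    rcases k4 with c4 | c4
    · rcases k5 with c5 | c5
      · rcases k6 with c6 | c6
        · rcases k7 with c7 | c7
          · rcases k8 with c8 | c8
            · rcases k9 with c9 | c9
              · rcases k10 with c10 | c10
                · rcases k11 with c11 | c11
                  · rcases k12 with c12 | c12
                    · rcases k13 with c13 | c13
                      · exact absurd c13 t13
                      · linarith
                    · linarith
                  · linarith
                · linarith
              · linarith
            · linarith
          · linarith
        · linarith
      · linarith
    · linarith
  refine ⟨h4, ?_⟩
  have hf : (Finset.univ.filter (fun i : Fin 14 => 5 ≤ (i : ℕ))) = {5,6,7,8,9,10,11,12,13} := by decide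
  rw [hf]
  have kT := key {0,1,5,6,7,8,9,10,11,12,13}
  simp [Finset.sum_insert, Finset.mem_insert] at kT ⊢
  rcases kT with h | h
  · linarith
  · linarith
end

section
/- Let α₁ ≥ α₂ ≥ ⋯ ≥ α₁₄ ≥ 0 be real numbers with α₁ + ⋯ + α₁₄ = 1. If α₁ + α₂ < 1/2, then there exists a subset S ⊆ {1,…,14} with 2/5 ≤ ∑_{i ∈ S} αᵢ ≤ 3/5. -/
/-- If `α₁ ≥ ⋯ ≥ α₁₄ ≥ 0` sum to `1` and `α₁ + α₂ < 1/2`, then some subset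
`S ⊆ {1,…,14}` has `2/5 ≤ ∑_{i ∈ S} αᵢ ≤ 3/5`. -/
theorem stmt_1 (α : Fin 14 → ℝ)
    (hmono : ∀ i j : Fin 14, i ≤ j → α j ≤ α i)
    (hnonneg : ∀ i, 0 ≤ α i)
    (hsum : ∑ i, α i = 1)
    (h12 : α 0 + α 1 < 1 / 2) :
    ∃ S : Finset (Fin 14), 2 / 5 ≤ ∑ i ∈ S, α i ∧ ∑ i ∈ S, α i ≤ 3 / 5 := by
  by_cases h0 : 2 / 5 ≤ α 0
  · refine ⟨{0}, ?_, ?_⟩ <;> rw [Finset.sum_singleton] <;>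
      [exact h0; linarith [hnonneg 1]]
  by_cases h01 : 2 / 5 ≤ α 0 + α 1
  · refine ⟨{0, 1}, ?_, ?_⟩ <;> rw [Finset.sum_pair (by decide : (0 : Fin 14) ≠ 1)] <;>
      linarith
  push_neg at h0 h01
  -- extend α to ℕ by 0
  set α' : ℕ → ℝ := fun i => if h : i < 14 then α ⟨i, h⟩ else 0 with hα'
  have hα'eq : ∀ i : Fin 14, α' (i : ℕ) = α i := by
    intro i
    simp [hα', i.isLt]
  have hα'nonneg : ∀ i, 0 ≤ α' i := by
    intro i
    by_cases h : i < 14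
    · simp only [hα', dif_pos h]; exact hnonneg _
    · simp [hα', h]
  have hT14 : ∑ i ∈ Finset.range 14, α' i = 1 := by
    rw [← Fin.sum_univ_eq_sum_range α' 14]
    rw [← hsum]
    exact Finset.sum_congr rfl fun i _ => hα'eq i
  -- any partial sum over range k (k ≤ 14) is realized by a subset
  have key : ∀ k, k ≤ 14 → ∃ S : Finset (Fin 14),
      ∑ i ∈ S, α i = ∑ i ∈ Finset.range k, α' i := by
    intro k hk
    refine ⟨Finset.univ.filter (fun i : Fin 14 => (i : ℕ) < k), ?_⟩
    rw [Finset.sum_filter]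
    have h1 : ∀ i : Fin 14, (if (i : ℕ) < k then α i else 0)
        = (fun n => if n < k then α' n else 0) (i : ℕ) := by
      intro i; simp [hα'eq]
    rw [Finset.sum_congr rfl fun i _ => h1 i,
      Fin.sum_univ_eq_sum_range (fun n => if n < k then α' n else 0) 14]
    rw [← Finset.sum_subset (Finset.range_subset_range.2 hk)
      (fun i _ hi => if_neg fun h => hi (Finset.mem_range.2 h))]
    exact Finset.sum_congr rfl fun i hi => if_pos (Finset.mem_range.1 hi)
  have hex : ∃ k, 2 / 5 ≤ ∑ i ∈ Finset.range k, α' i := ⟨14, by rw [hT14]; norm_num⟩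
  set k := Nat.find hex with hkdef
  have hk : 2 / 5 ≤ ∑ i ∈ Finset.range k, α' i := Nat.find_spec hex
  have hk14 : k ≤ 14 := Nat.find_le (by rw [hT14]; norm_num)
  -- k ≥ 3
  have hk3 : 3 ≤ k := by
    by_contra h
    push_neg at h
    have hsub : Finset.range k ⊆ Finset.range 2 :=
      Finset.range_subset_range.2 (by omega)
    have hle : ∑ i ∈ Finset.range k, α' i ≤ ∑ i ∈ Finset.range 2, α' i :=
      Finset.sum_le_sum_of_subset_of_nonneg hsub fun i _ _ => hα'nonneg i
    have h2 : ∑ i ∈ Finset.range 2, α' i = α 0 + α 1 := by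
      rw [Finset.sum_range_succ, Finset.sum_range_one]
      have e0 : α' 0 = α 0 := hα'eq 0
      have e1 : α' 1 = α 1 := hα'eq 1
      rw [e0, e1]
    rw [h2] at hle
    linarith
  have hk1 : k - 1 < k := by omega
  have hprev : ¬ (2 / 5 ≤ ∑ i ∈ Finset.range (k - 1), α' i) := Nat.find_min hex hk1
  push_neg at hprev
  have hstep : ∑ i ∈ Finset.range k, α' i
      = ∑ i ∈ Finset.range (k - 1), α' i + α' (k - 1) := by
    have h : k = (k - 1) + 1 := by omega
    conv_lhs => rw [h]
    rw [Finset.sum_range_succ]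
  have hlt14 : k - 1 < 14 := by omega
  have hαk : α' (k - 1) ≤ α 1 := by
    have e : α' (k - 1) = α ⟨k - 1, hlt14⟩ := by simp [hα', hlt14]
    rw [e]
    exact hmono 1 ⟨k - 1, hlt14⟩ (by
      have : (1 : ℕ) ≤ k - 1 := by omega
      exact Fin.mk_le_mk.mpr (by simpa using this))
  have hα1 : α 1 < 1 / 5 := by
    have := hmono 0 1 (by decide)
    linarith
  obtain ⟨S, hS⟩ := key k hk14
  exact ⟨S, by rw [hS]; exact hk, by rw [hS]; linarith⟩
end

section
/- Let 0 < x₀ ≤ x be reals with x₀ = N₁⋯N₁₄ where N₁ ≥ ⋯ ≥ N₁₄ ≥ 1, and write Nᵢ = x₀^{αᵢ}. Suppose N₁N₂ < x₀^{1/2}, no sub-product ∏_{i∈S} Nᵢ lies in [x₀^{5/12}, x₀^{7/12}], and α₁+⋯+α₁₄ = 1. Then setting M = N₁N₂N₆⋯N₁₄ and N = N₃N₄, one has M < x₀^{5/12}, N < x₀^{5/12}, N₅ > x₀^{1/6}, M ≥ N, and M·N₅ ≥ x₀^{1/2}. -/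
/-- Case 3 grouping: if `N₁ ≥ ⋯ ≥ N₁₄ ≥ 1` with product `x₀ ≤ x`,
`N₁N₂ < x₀^{1/2}`, and no sub-product lies in `[x₀^{5/12}, x₀^{7/12}]`, then
`M = N₁N₂N₆⋯N₁₄ < x₀^{5/12}`, `N = N₃N₄ < x₀^{5/12}`, `N₅ > x₀^{1/6}`,
`M ≥ N`, and `M·N₅ ≥ x₀^{1/2}`. -/
theorem stmt_14 (x x₀ : ℝ) (N : Fin 14 → ℝ)
    (hmono : ∀ i j : Fin 14, i ≤ j → N j ≤ N i)
    (hone : ∀ i, 1 ≤ N i)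
    (hx₀ : x₀ = ∏ i, N i) (hx : x₀ ≤ x) (hx₀pos : 0 < x₀)
    (h12 : N 0 * N 1 < x₀ ^ ((1 : ℝ) / 2))
    (hnosub : ∀ S : Finset (Fin 14),
      ¬ (x₀ ^ ((5 : ℝ) / 12) ≤ ∏ i ∈ S, N i ∧ ∏ i ∈ S, N i ≤ x₀ ^ ((7 : ℝ) / 12))) :
    N 0 * N 1 * ∏ i ∈ Finset.univ.filter (fun i : Fin 14 => 5 ≤ (i : ℕ)), N i
        < x₀ ^ ((5 : ℝ) / 12) ∧
      N 2 * N 3 < x₀ ^ ((5 : ℝ) / 12) ∧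
      N 4 > x₀ ^ ((1 : ℝ) / 6) ∧
      N 2 * N 3 ≤ N 0 * N 1 * ∏ i ∈ Finset.univ.filter (fun i : Fin 14 => 5 ≤ (i : ℕ)), N i ∧
      x₀ ^ ((1 : ℝ) / 2) ≤
        (N 0 * N 1 * ∏ i ∈ Finset.univ.filter (fun i : Fin 14 => 5 ≤ (i : ℕ)), N i) * N 4 := by
  have hfil : ∏ i ∈ Finset.univ.filter (fun i : Fin 14 => 5 ≤ (i : ℕ)), N i
      = N 5 * N 6 * N 7 * N 8 * N 9 * N 10 * N 11 * N 12 * N 13 := by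
    rw [show Finset.univ.filter (fun i : Fin 14 => 5 ≤ (i : ℕ))
        = ({5,6,7,8,9,10,11,12,13} : Finset (Fin 14)) from by decide]
    simp [Finset.prod_insert, Finset.mem_insert]
    ring
  have hx₀' : x₀ = N 0 * N 1 * N 2 * N 3 * N 4 * N 5 * N 6 * N 7 * N 8 * N 9 * N 10 * N 11 * N 12 * N 13 := by
    rw [hx₀, show (Finset.univ : Finset (Fin 14))
        = ({0,1,2,3,4,5,6,7,8,9,10,11,12,13} : Finset (Fin 14)) from by decide]
    simp [Finset.prod_insert, Finset.mem_insert]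
    ring
  have h1x : (1:ℝ) ≤ x₀ := by
    rw [hx₀]
    calc (1:ℝ) = ∏ _i : Fin 14, (1:ℝ) := by simp
      _ ≤ ∏ i, N i := Finset.prod_le_prod (fun i _ => zero_le_one) (fun i _ => hone i)
  have hx1 : 1 < x₀ := by
    rcases lt_or_eq_of_le h1x with h | h
    · exact h
    · exfalso; apply hnosub ∅; rw [← h]; simp
  set A := x₀ ^ ((5:ℝ)/12) with hA
  set B := x₀ ^ ((7:ℝ)/12) with hB
  set s := x₀ ^ ((1:ℝ)/6) with hs
  have hApos : 0 < A := Real.rpow_pos_of_pos hx₀pos _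
  have hBpos : 0 < B := Real.rpow_pos_of_pos hx₀pos _
  have hspos : 0 < s := Real.rpow_pos_of_pos hx₀pos _
  have hhalfB : x₀ ^ ((1:ℝ)/2) ≤ B :=
    Real.rpow_le_rpow_of_exponent_le h1x (by norm_num)
  have hAhalf : A ≤ x₀ ^ ((1:ℝ)/2) :=
    Real.rpow_le_rpow_of_exponent_le h1x (by norm_num)
  have hAsix : A * s = B := by
    rw [hA, hB, hs, ← Real.rpow_add hx₀pos]; norm_num
  have hAAsix : A * A * s = x₀ := by
    rw [hA, hs, ← Real.rpow_add hx₀pos, ← Real.rpow_add hx₀pos]; norm_num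
  have hABx : B * A = x₀ := by
    rw [hA, hB, ← Real.rpow_add hx₀pos]; norm_num
  have hsss : s * s * s = x₀ ^ ((1:ℝ)/2) := by
    rw [hs, ← Real.rpow_add hx₀pos, ← Real.rpow_add hx₀pos]; norm_num
  have hNpos : ∀ i : Fin 14, (0:ℝ) < N i := fun i => lt_of_lt_of_le one_pos (hone i)
  have hNnn : ∀ i : Fin 14, (0:ℝ) ≤ N i := fun i => le_of_lt (hNpos i)
  have key : ∀ S : Finset (Fin 14), (∏ i ∈ S, N i) < B → (∏ i ∈ S, N i) < A := by
    intro S hS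
    by_contra h
    exact hnosub S ⟨le_of_not_gt h, le_of_lt hS⟩
  have h23le : N 2 * N 3 ≤ N 0 * N 1 :=
    mul_le_mul (hmono 0 2 (by decide)) (hmono 1 3 (by decide)) (hNnn 3) (hNnn 0)
  have h23A : N 2 * N 3 < A := by
    have hp : ∏ i ∈ ({2,3} : Finset (Fin 14)), N i = N 2 * N 3 :=
      Finset.prod_pair (by decide)
    have := key {2,3} (by rw [hp]; exact (h23le.trans_lt h12).trans_le hhalfB)
    rwa [hp] at this
  have hMA : N 0 * N 1 * (N 5 * N 6 * N 7 * N 8 * N 9 * N 10 * N 11 * N 12 * N 13) < A := by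
    by_contra hM
    push_neg at hM
    have hpM : ∏ i ∈ ({0,1,5,6,7,8,9,10,11,12,13} : Finset (Fin 14)), N i
        = N 0 * N 1 * (N 5 * N 6 * N 7 * N 8 * N 9 * N 10 * N 11 * N 12 * N 13) := by
      simp [Finset.prod_insert, Finset.mem_insert]
      ring
    have hBM : B < N 0 * N 1 * (N 5 * N 6 * N 7 * N 8 * N 9 * N 10 * N 11 * N 12 * N 13) := by
      by_contra hB'
      push_neg at hB'
      exact hnosub _ ⟨hpM ▸ hM, hpM ▸ hB'⟩
    have hPpos : (0:ℝ) < N 2 * N 3 * N 4 := mul_pos (mul_pos (hNpos 2) (hNpos 3)) (hNpos 4)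
    have h234 : N 2 * N 3 * N 4 < A := by
      have h1 : B * (N 2 * N 3 * N 4) < B * A := by
        calc B * (N 2 * N 3 * N 4)
            < (N 0 * N 1 * (N 5 * N 6 * N 7 * N 8 * N 9 * N 10 * N 11 * N 12 * N 13)) * (N 2 * N 3 * N 4) :=
              mul_lt_mul_of_pos_right hBM hPpos
          _ = x₀ := by rw [hx₀']; ring
          _ = B * A := hABx.symm
      exact lt_of_mul_lt_mul_left h1 (le_of_lt hBpos)
    have h4s : N 4 < s := by
      by_contra h
      push_neg at h
      have hcube : s * s * s ≤ N 4 * N 4 * N 4 :=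
        mul_le_mul (mul_le_mul h h (le_of_lt hspos) (hNnn 4)) h (le_of_lt hspos)
          (mul_nonneg (hNnn 4) (hNnn 4))
      have h444 : N 4 * N 4 * N 4 ≤ N 2 * N 3 * N 4 :=
        mul_le_mul_of_nonneg_right
          (mul_le_mul (hmono 2 4 (by decide)) (hmono 3 4 (by decide)) (hNnn 4) (hNnn 2))
          (hNnn 4)
      have hcontra : s * s * s < s * s * s := by
        calc s * s * s ≤ N 4 * N 4 * N 4 := hcube
          _ ≤ N 2 * N 3 * N 4 := h444
          _ < A := h234
          _ ≤ x₀ ^ ((1:ℝ)/2) := hAhalf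
          _ = s * s * s := hsss.symm
      exact absurd hcontra (lt_irrefl _)
    have hQ5 : N 0 * N 1 < A := by
      have hp : ∏ i ∈ ({0,1} : Finset (Fin 14)), N i = N 0 * N 1 :=
        Finset.prod_pair (by decide)
      have := key {0,1} (by rw [hp]; exact h12.trans_le hhalfB)
      rwa [hp] at this
    have hQ6 : N 0 * N 1 * N 5 < A := by
      have hp : ∏ i ∈ ({0,1,5} : Finset (Fin 14)), N i = N 0 * N 1 * N 5 := by
        simp [Finset.prod_insert, Finset.mem_insert]
        ring
      have hNk : N 5 < s := (hmono 4 5 (by decide)).trans_lt h4s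
      have hstep : N 0 * N 1 * N 5 < B := by
        calc N 0 * N 1 * N 5 = (N 0 * N 1) * N 5 := by ring
          _ < A * s := mul_lt_mul'' hQ5 hNk (by apply_rules [mul_nonneg, hNnn]) (hNnn 5)
          _ = B := hAsix
      have := key {0,1,5} (by rw [hp]; exact hstep)
      rwa [hp] at this
    have hQ7 : N 0 * N 1 * N 5 * N 6 < A := by
      have hp : ∏ i ∈ ({0,1,5,6} : Finset (Fin 14)), N i = N 0 * N 1 * N 5 * N 6 := by
        simp [Finset.prod_insert, Finset.mem_insert]
        ring
      have hNk : N 6 < s := (hmono 4 6 (by decide)).trans_lt h4s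
      have hstep : N 0 * N 1 * N 5 * N 6 < B := by
        calc N 0 * N 1 * N 5 * N 6 = (N 0 * N 1 * N 5) * N 6 := by ring
          _ < A * s := mul_lt_mul'' hQ6 hNk (by apply_rules [mul_nonneg, hNnn]) (hNnn 6)
          _ = B := hAsix
      have := key {0,1,5,6} (by rw [hp]; exact hstep)
      rwa [hp] at this
    have hQ8 : N 0 * N 1 * N 5 * N 6 * N 7 < A := by
      have hp : ∏ i ∈ ({0,1,5,6,7} : Finset (Fin 14)), N i = N 0 * N 1 * N 5 * N 6 * N 7 := by
        simp [Finset.prod_insert, Finset.mem_insert]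
        ring
      have hNk : N 7 < s := (hmono 4 7 (by decide)).trans_lt h4s
      have hstep : N 0 * N 1 * N 5 * N 6 * N 7 < B := by
        calc N 0 * N 1 * N 5 * N 6 * N 7 = (N 0 * N 1 * N 5 * N 6) * N 7 := by ring
          _ < A * s := mul_lt_mul'' hQ7 hNk (by apply_rules [mul_nonneg, hNnn]) (hNnn 7)
          _ = B := hAsix
      have := key {0,1,5,6,7} (by rw [hp]; exact hstep)
      rwa [hp] at this
    have hQ9 : N 0 * N 1 * N 5 * N 6 * N 7 * N 8 < A := by
      have hp : ∏ i ∈ ({0,1,5,6,7,8} : Finset (Fin 14)), N i = N 0 * N 1 * N 5 * N 6 * N 7 * N 8 := by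
        simp [Finset.prod_insert, Finset.mem_insert]
        ring
      have hNk : N 8 < s := (hmono 4 8 (by decide)).trans_lt h4s
      have hstep : N 0 * N 1 * N 5 * N 6 * N 7 * N 8 < B := by
        calc N 0 * N 1 * N 5 * N 6 * N 7 * N 8 = (N 0 * N 1 * N 5 * N 6 * N 7) * N 8 := by ring
          _ < A * s := mul_lt_mul'' hQ8 hNk (by apply_rules [mul_nonneg, hNnn]) (hNnn 8)
          _ = B := hAsix
      have := key {0,1,5,6,7,8} (by rw [hp]; exact hstep)
      rwa [hp] at this
    have hQ10 : N 0 * N 1 * N 5 * N 6 * N 7 * N 8 * N 9 < A := by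
      have hp : ∏ i ∈ ({0,1,5,6,7,8,9} : Finset (Fin 14)), N i = N 0 * N 1 * N 5 * N 6 * N 7 * N 8 * N 9 := by
        simp [Finset.prod_insert, Finset.mem_insert]
        ring
      have hNk : N 9 < s := (hmono 4 9 (by decide)).trans_lt h4s
      have hstep : N 0 * N 1 * N 5 * N 6 * N 7 * N 8 * N 9 < B := by
        calc N 0 * N 1 * N 5 * N 6 * N 7 * N 8 * N 9 = (N 0 * N 1 * N 5 * N 6 * N 7 * N 8) * N 9 := by ring
          _ < A * s := mul_lt_mul'' hQ9 hNk (by apply_rules [mul_nonneg, hNnn]) (hNnn 9)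
          _ = B := hAsix
      have := key {0,1,5,6,7,8,9} (by rw [hp]; exact hstep)
      rwa [hp] at this
    have hQ11 : N 0 * N 1 * N 5 * N 6 * N 7 * N 8 * N 9 * N 10 < A := by
      have hp : ∏ i ∈ ({0,1,5,6,7,8,9,10} : Finset (Fin 14)), N i = N 0 * N 1 * N 5 * N 6 * N 7 * N 8 * N 9 * N 10 := by
        simp [Finset.prod_insert, Finset.mem_insert]
        ring
      have hNk : N 10 < s := (hmono 4 10 (by decide)).trans_lt h4s
      have hstep : N 0 * N 1 * N 5 * N 6 * N 7 * N 8 * N 9 * N 10 < B := by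
        calc N 0 * N 1 * N 5 * N 6 * N 7 * N 8 * N 9 * N 10 = (N 0 * N 1 * N 5 * N 6 * N 7 * N 8 * N 9) * N 10 := by ring
          _ < A * s := mul_lt_mul'' hQ10 hNk (by apply_rules [mul_nonneg, hNnn]) (hNnn 10)
          _ = B := hAsix
      have := key {0,1,5,6,7,8,9,10} (by rw [hp]; exact hstep)
      rwa [hp] at this
    have hQ12 : N 0 * N 1 * N 5 * N 6 * N 7 * N 8 * N 9 * N 10 * N 11 < A := by
      have hp : ∏ i ∈ ({0,1,5,6,7,8,9,10,11} : Finset (Fin 14)), N i = N 0 * N 1 * N 5 * N 6 * N 7 * N 8 * N 9 * N 10 * N 11 := by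
        simp [Finset.prod_insert, Finset.mem_insert]
        ring
      have hNk : N 11 < s := (hmono 4 11 (by decide)).trans_lt h4s
      have hstep : N 0 * N 1 * N 5 * N 6 * N 7 * N 8 * N 9 * N 10 * N 11 < B := by
        calc N 0 * N 1 * N 5 * N 6 * N 7 * N 8 * N 9 * N 10 * N 11 = (N 0 * N 1 * N 5 * N 6 * N 7 * N 8 * N 9 * N 10) * N 11 := by ring
          _ < A * s := mul_lt_mul'' hQ11 hNk (by apply_rules [mul_nonneg, hNnn]) (hNnn 11)
          _ = B := hAsix
      have := key {0,1,5,6,7,8,9,10,11} (by rw [hp]; exact hstep)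
      rwa [hp] at this
    have hQ13 : N 0 * N 1 * N 5 * N 6 * N 7 * N 8 * N 9 * N 10 * N 11 * N 12 < A := by
      have hp : ∏ i ∈ ({0,1,5,6,7,8,9,10,11,12} : Finset (Fin 14)), N i = N 0 * N 1 * N 5 * N 6 * N 7 * N 8 * N 9 * N 10 * N 11 * N 12 := by
        simp [Finset.prod_insert, Finset.mem_insert]
        ring
      have hNk : N 12 < s := (hmono 4 12 (by decide)).trans_lt h4s
      have hstep : N 0 * N 1 * N 5 * N 6 * N 7 * N 8 * N 9 * N 10 * N 11 * N 12 < B := by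
        calc N 0 * N 1 * N 5 * N 6 * N 7 * N 8 * N 9 * N 10 * N 11 * N 12 = (N 0 * N 1 * N 5 * N 6 * N 7 * N 8 * N 9 * N 10 * N 11) * N 12 := by ring
          _ < A * s := mul_lt_mul'' hQ12 hNk (by apply_rules [mul_nonneg, hNnn]) (hNnn 12)
          _ = B := hAsix
      have := key {0,1,5,6,7,8,9,10,11,12} (by rw [hp]; exact hstep)
      rwa [hp] at this
    have hQ14 : N 0 * N 1 * N 5 * N 6 * N 7 * N 8 * N 9 * N 10 * N 11 * N 12 * N 13 < A := by
      have hp : ∏ i ∈ ({0,1,5,6,7,8,9,10,11,12,13} : Finset (Fin 14)), N i = N 0 * N 1 * N 5 * N 6 * N 7 * N 8 * N 9 * N 10 * N 11 * N 12 * N 13 := by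
        simp [Finset.prod_insert, Finset.mem_insert]
        ring
      have hNk : N 13 < s := (hmono 4 13 (by decide)).trans_lt h4s
      have hstep : N 0 * N 1 * N 5 * N 6 * N 7 * N 8 * N 9 * N 10 * N 11 * N 12 * N 13 < B := by
        calc N 0 * N 1 * N 5 * N 6 * N 7 * N 8 * N 9 * N 10 * N 11 * N 12 * N 13 = (N 0 * N 1 * N 5 * N 6 * N 7 * N 8 * N 9 * N 10 * N 11 * N 12) * N 13 := by ring
          _ < A * s := mul_lt_mul'' hQ13 hNk (by apply_rules [mul_nonneg, hNnn]) (hNnn 13)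
          _ = B := hAsix
      have := key {0,1,5,6,7,8,9,10,11,12,13} (by rw [hp]; exact hstep)
      rwa [hp] at this
    exact absurd hQ14 (not_lt.mpr (hM.trans_eq (by ring)))
  rw [hfil]
  refine ⟨hMA, h23A, ?_, ?_, ?_⟩
  · have hMN : (N 0 * N 1 * (N 5 * N 6 * N 7 * N 8 * N 9 * N 10 * N 11 * N 12 * N 13)) * (N 2 * N 3) < A * A :=
      mul_lt_mul'' hMA h23A (by apply_rules [mul_nonneg, hNnn]) (mul_nonneg (hNnn 2) (hNnn 3))
    have hlt : A * A * s < A * A * N 4 := by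
      calc A * A * s = x₀ := hAAsix
        _ = (N 0 * N 1 * (N 5 * N 6 * N 7 * N 8 * N 9 * N 10 * N 11 * N 12 * N 13)) * (N 2 * N 3) * N 4 := by rw [hx₀']; ring
        _ < A * A * N 4 := mul_lt_mul_of_pos_right hMN (hNpos 4)
    exact lt_of_mul_lt_mul_left hlt (by positivity)
  · have om : ∀ a b : ℝ, 1 ≤ a → 1 ≤ b → 1 ≤ a * b := fun a b ha hb =>
      le_trans hb (le_mul_of_one_le_left (by linarith) ha)
    have h1r : (1:ℝ) ≤ N 5 * N 6 * N 7 * N 8 * N 9 * N 10 * N 11 * N 12 * N 13 := om _ _ (om _ _ (om _ _ (om _ _ (om _ _ (om _ _ (om _ _ (om _ _ (hone 5) (hone 6)) (hone 7)) (hone 8)) (hone 9)) (hone 10)) (hone 11)) (hone 12)) (hone 13)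
    calc N 2 * N 3 ≤ N 0 * N 1 := h23le
      _ ≤ N 0 * N 1 * (N 5 * N 6 * N 7 * N 8 * N 9 * N 10 * N 11 * N 12 * N 13) := le_mul_of_one_le_right (mul_nonneg (hNnn 0) (hNnn 1)) h1r
  · have hMNpos : (0:ℝ) < (N 0 * N 1 * (N 5 * N 6 * N 7 * N 8 * N 9 * N 10 * N 11 * N 12 * N 13)) * N 4 := by apply_rules [mul_pos, hNpos]
    have h1 : B * A < ((N 0 * N 1 * (N 5 * N 6 * N 7 * N 8 * N 9 * N 10 * N 11 * N 12 * N 13)) * N 4) * A := by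
      calc B * A = x₀ := hABx
        _ = ((N 0 * N 1 * (N 5 * N 6 * N 7 * N 8 * N 9 * N 10 * N 11 * N 12 * N 13)) * N 4) * (N 2 * N 3) := by rw [hx₀']; ring
        _ < ((N 0 * N 1 * (N 5 * N 6 * N 7 * N 8 * N 9 * N 10 * N 11 * N 12 * N 13)) * N 4) * A := mul_lt_mul_of_pos_left h23A hMNpos
    exact hhalfB.trans (le_of_lt (lt_of_mul_lt_mul_right h1 (le_of_lt hApos)))
end
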